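/- For every real q with 0 < q < 1 and every real x > -1/q, the partial derivative ∂θ/∂x(q,x) is strictly positive. -/

import Mathlib

/-- The partial theta function `θ(q,x) = ∑_{j=0}^∞ q^(j(j+1)/2) x^j`. -/
noncomputable def theta (q x : ℝ) : ℝ := ∑' j : ℕ, q ^ (j * (j + 1) / 2) * x ^ j

open Filter

lemma tri_succ (j : ℕ) : (j+1) * (j+2) / 2 = j * (j+1) / 2 + (j+1) := by
  have h : (j+1) * (j+2) = j * (j+1) + (j+1) * 2 := by ring
  rw [h, Nat.add_mul_div_right _ _ (by norm_num : 0 < 2)]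

lemma sum_master {q : ℝ} (hq₁ : 0 < q) (hq₂ : q < 1) (r : ℝ) (hr : 0 ≤ r) :
    Summable (fun j : ℕ => ((j:ℝ)+1) * q ^ (j * (j+1) / 2) * r ^ j) := by
  apply summable_of_ratio_norm_eventually_le (r := 1/2) (by norm_num)
  have h0 : Tendsto (fun n : ℕ => q ^ (n+1) * (2 * (r+1))) atTop (nhds (0 * (2*(r+1)))) := by
    exact ((tendsto_pow_atTop_nhds_zero_of_lt_one hq₁.le hq₂).comp (tendsto_add_atTop_nat 1)).mul_const _
  rw [zero_mul] at h0
  filter_upwards [h0.eventually_le_const (by norm_num : (0:ℝ) < 1/2)] with n hn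
  have hq : 0 ≤ q := hq₁.le
  have e1 : q ^ ((n+1) * (n+2) / 2) = q ^ (n * (n+1) / 2) * q ^ (n+1) := by
    rw [tri_succ, pow_add]
  rw [Real.norm_eq_abs, Real.norm_eq_abs, abs_of_nonneg (by positivity), abs_of_nonneg (by positivity)]
  push_cast
  rw [e1]
  have key : ((n:ℝ)+1+1) * (q ^ (n * (n+1) / 2) * q ^ (n+1)) * r ^ (n+1)
      ≤ (q^(n+1) * (2*(r+1))) * (((n:ℝ)+1) * q ^ (n * (n+1) / 2) * r ^ n) := by
    have h1 : ((n:ℝ)+1+1) ≤ 2 * ((n:ℝ)+1) := by push_cast; linarith [Nat.cast_nonneg (α := ℝ) n]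
    have h2 : r ^ (n+1) ≤ (r+1) * r ^ n := by
      rw [pow_succ]
      nlinarith [pow_nonneg hr n]
    have hQ : (0:ℝ) ≤ q ^ (n * (n+1) / 2) * q ^ (n+1) := by positivity
    have step : (((n:ℝ)+1+1) * (q ^ (n * (n+1) / 2) * q ^ (n+1))) * r ^ (n+1)
        ≤ ((2*((n:ℝ)+1)) * (q ^ (n * (n+1) / 2) * q ^ (n+1))) * ((r+1) * r ^ n) := by
      apply mul_le_mul (mul_le_mul_of_nonneg_right h1 hQ) h2 (by positivity) (by positivity)
    calc ((n:ℝ)+1+1) * (q ^ (n * (n+1) / 2) * q ^ (n+1)) * r ^ (n+1)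
        ≤ ((2*((n:ℝ)+1)) * (q ^ (n * (n+1) / 2) * q ^ (n+1))) * ((r+1) * r ^ n) := step
      _ = (q^(n+1) * (2*(r+1))) * (((n:ℝ)+1) * q ^ (n * (n+1) / 2) * r ^ n) := by ring
  calc ((n:ℝ)+1+1) * (q ^ (n * (n+1) / 2) * q ^ (n+1)) * r ^ (n+1)
      ≤ (q^(n+1) * (2*(r+1))) * (((n:ℝ)+1) * q ^ (n * (n+1) / 2) * r ^ n) := key
    _ ≤ 1/2 * (((n:ℝ)+1) * q ^ (n * (n+1) / 2) * r ^ n) := by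
        apply mul_le_mul_of_nonneg_right hn (by positivity)

lemma sum_theta {q : ℝ} (hq₁ : 0 < q) (hq₂ : q < 1) (x : ℝ) :
    Summable (fun j : ℕ => q ^ (j * (j+1) / 2) * x ^ j) := by
  apply Summable.of_norm_bounded (sum_master hq₁ hq₂ |x| (abs_nonneg x))
  intro j
  rw [Real.norm_eq_abs, abs_mul, abs_pow, abs_pow, abs_of_nonneg hq₁.le]
  have : (0:ℝ) ≤ q ^ (j*(j+1)/2) * |x| ^ j := by positivity
  nlinarith [Nat.cast_nonneg (α := ℝ) j]

lemma sum_H {q : ℝ} (hq₁ : 0 < q) (hq₂ : q < 1) (x : ℝ) :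
    Summable (fun j : ℕ => ((j:ℝ)+1) * q ^ (j * (j+1) / 2) * x ^ j) := by
  apply Summable.of_norm_bounded (sum_master hq₁ hq₂ |x| (abs_nonneg x))
  intro j
  rw [Real.norm_eq_abs, abs_mul, abs_mul, abs_pow, abs_pow, abs_of_nonneg hq₁.le,
    abs_of_nonneg (by positivity : (0:ℝ) ≤ (j:ℝ)+1)]

lemma theta_FE {q : ℝ} (hq₁ : 0 < q) (hq₂ : q < 1) (x : ℝ) :
    theta q x = 1 + q * x * theta q (q * x) := by
  unfold theta
  rw [Summable.tsum_eq_zero_add (sum_theta hq₁ hq₂ x)]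
  have h1 : ∀ j : ℕ, q ^ ((j+1) * (j+1+1) / 2) * x ^ (j+1)
      = (q * x) * (q ^ (j * (j+1) / 2) * (q * x) ^ j) := by
    intro j
    have : (j+1) * (j+1+1) / 2 = j * (j+1) / 2 + (j+1) := tri_succ j
    rw [this, pow_add, mul_pow]
    ring
  simp only [h1]
  rw [tsum_mul_left]
  norm_num

noncomputable def Hf (q x : ℝ) : ℝ := ∑' j : ℕ, ((j:ℝ)+1) * q ^ (j * (j+1) / 2) * x ^ j

lemma Hf_FE {q : ℝ} (hq₁ : 0 < q) (hq₂ : q < 1) (x : ℝ) :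
    Hf q x = theta q x + q * x * Hf q (q * x) := by
  have hsum2 : Summable (fun j : ℕ => (j:ℝ) * q ^ (j * (j+1) / 2) * x ^ j) := by
    apply Summable.of_norm_bounded (sum_master hq₁ hq₂ |x| (abs_nonneg x))
    intro j
    rw [Real.norm_eq_abs, abs_mul, abs_mul, abs_pow, abs_pow, abs_of_nonneg hq₁.le,
      abs_of_nonneg (Nat.cast_nonneg j)]
    have hj : |(j:ℝ)| = (j:ℝ) := abs_of_nonneg (Nat.cast_nonneg j)
    have : (0:ℝ) ≤ q ^ (j*(j+1)/2) * |x| ^ j := by positivity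
    nlinarith [Nat.cast_nonneg (α := ℝ) j]
  have split : Hf q x = theta q x + ∑' j : ℕ, (j:ℝ) * q ^ (j * (j+1) / 2) * x ^ j := by
    unfold Hf theta
    rw [← Summable.tsum_add (sum_theta hq₁ hq₂ x) hsum2]
    congr 1; funext j; ring
  rw [split]
  congr 1
  rw [Summable.tsum_eq_zero_add hsum2]
  have h1 : ∀ j : ℕ, ((j:ℝ)+1) * q ^ ((j+1) * (j+1+1) / 2) * x ^ (j+1)
      = (q * x) * (((j:ℝ)+1) * q ^ (j * (j+1) / 2) * (q * x) ^ j) := by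
    intro j
    rw [tri_succ j, pow_add, mul_pow]
    ring
  simp only [Nat.cast_add, Nat.cast_one]
  norm_num
  calc ∑' j : ℕ, ((j:ℝ)+1) * q ^ ((j+1) * (j+1+1) / 2) * x ^ (j+1)
      = ∑' j : ℕ, (q * x) * (((j:ℝ)+1) * q ^ (j * (j+1) / 2) * (q * x) ^ j) := by
        congr 1; funext j; exact h1 j
    _ = q * x * Hf q (q * x) := by rw [tsum_mul_left]; rfl

lemma tri_ge (j : ℕ) : j ≤ j * (j+1) / 2 := by
  cases j with
  | zero => simp
  | succ n => rw [tri_succ n]; omega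

lemma sum_geom_aux {q : ℝ} (hq₁ : 0 < q) (hq₂ : q < 1) :
    Summable (fun j : ℕ => ((j:ℝ)+1) * q ^ j) := by
  have h1 : Summable (fun j : ℕ => (j:ℝ) * q ^ j) := by
    have := summable_pow_mul_geometric_of_norm_lt_one (k := 1) (r := q)
      (by rw [Real.norm_eq_abs, abs_of_nonneg hq₁.le]; exact hq₂)
    simpa using this
  have h2 : Summable (fun j : ℕ => q ^ j) := summable_geometric_of_lt_one hq₁.le hq₂
  have := h1.add h2
  convert this using 2 with j
  ring

lemma abs_term_le' {q : ℝ} (hq₁ : 0 < q) (hq₂ : q < 1) {z : ℝ} (hz : |z| ≤ 1) (j : ℕ) :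
    |q ^ (j * (j+1) / 2) * z ^ j| ≤ q ^ j := by
  rw [abs_mul, abs_pow, abs_pow, abs_of_nonneg hq₁.le]
  have h1 : q ^ (j * (j+1) / 2) ≤ q ^ j := pow_le_pow_of_le_one hq₁.le hq₂.le (tri_ge j)
  have h2 : |z| ^ j ≤ 1 := pow_le_one₀ (abs_nonneg z) hz
  nlinarith [pow_nonneg hq₁.le (j*(j+1)/2), pow_nonneg (abs_nonneg z) j, pow_nonneg hq₁.le j]

lemma abs_theta_le {q : ℝ} (hq₁ : 0 < q) (hq₂ : q < 1) {z : ℝ} (hz : |z| ≤ 1) :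
    |theta q z| ≤ ∑' j : ℕ, ((j:ℝ)+1) * q ^ j := by
  unfold theta
  calc |∑' j : ℕ, q ^ (j * (j+1) / 2) * z ^ j|
      ≤ ∑' j : ℕ, |q ^ (j * (j+1) / 2) * z ^ j| := by
        have hs : Summable (fun j : ℕ => ‖q ^ (j*(j+1)/2) * z ^ j‖) := by
          simpa only [Real.norm_eq_abs] using (sum_theta hq₁ hq₂ z).abs
        have h := norm_tsum_le_tsum_norm (f := fun j : ℕ => q ^ (j*(j+1)/2) * z ^ j) hs
        simpa only [Real.norm_eq_abs] using h
    _ ≤ ∑' j : ℕ, ((j:ℝ)+1) * q ^ j := by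
        apply Summable.tsum_le_tsum _ (sum_theta hq₁ hq₂ z).abs (sum_geom_aux hq₁ hq₂)
        intro j
        calc |q ^ (j * (j+1) / 2) * z ^ j| ≤ q ^ j := abs_term_le' hq₁ hq₂ hz j
          _ ≤ ((j:ℝ)+1) * q ^ j := by
              nlinarith [pow_nonneg hq₁.le j, Nat.cast_nonneg (α := ℝ) j]

lemma abs_Hf_le {q : ℝ} (hq₁ : 0 < q) (hq₂ : q < 1) {z : ℝ} (hz : |z| ≤ 1) :
    |Hf q z| ≤ ∑' j : ℕ, ((j:ℝ)+1) * q ^ j := by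
  unfold Hf
  calc |∑' j : ℕ, ((j:ℝ)+1) * q ^ (j * (j+1) / 2) * z ^ j|
      ≤ ∑' j : ℕ, |((j:ℝ)+1) * q ^ (j * (j+1) / 2) * z ^ j| := by
        have hs : Summable (fun j : ℕ => ‖((j:ℝ)+1) * q ^ (j*(j+1)/2) * z ^ j‖) := by
          simpa only [Real.norm_eq_abs] using (sum_H hq₁ hq₂ z).abs
        have h := norm_tsum_le_tsum_norm (f := fun j : ℕ => ((j:ℝ)+1) * q ^ (j*(j+1)/2) * z ^ j) hs
        simpa only [Real.norm_eq_abs] using h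
    _ ≤ ∑' j : ℕ, ((j:ℝ)+1) * q ^ j := by
        apply Summable.tsum_le_tsum _ (sum_H hq₁ hq₂ z).abs (sum_geom_aux hq₁ hq₂)
        intro j
        have h := abs_term_le' hq₁ hq₂ hz j
        have hj : (0:ℝ) ≤ (j:ℝ)+1 := by positivity
        calc |((j:ℝ)+1) * q ^ (j * (j+1) / 2) * z ^ j|
            = ((j:ℝ)+1) * |q ^ (j * (j+1) / 2) * z ^ j| := by
              rw [mul_assoc, abs_mul, abs_of_nonneg hj]
          _ ≤ ((j:ℝ)+1) * q ^ j := by nlinarith [abs_nonneg (q ^ (j * (j+1) / 2) * z ^ j)]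

noncomputable def Ub (q z : ℝ) : ℝ := (1+q*z)/(1-q*z)
noncomputable def Lb (q z : ℝ) : ℝ := (1+q*z)/(1-q*z) - 2*q^2*z^2*(1-q)/((1-q*z)*(1-q^2*z))

lemma denoms {q : ℝ} (hq₁ : 0 < q) (hq₂ : q < 1) {z : ℝ} (hz₁ : -1 ≤ z) (hz₂ : z ≤ 0) :
    0 < 1 - q*z ∧ 0 < 1 - q^2*z ∧ 0 < 1 - q^3*z := by
  refine ⟨?_, ?_, ?_⟩ <;> nlinarith [pow_pos hq₁ 2, pow_pos hq₁ 3, sq_nonneg q]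

lemma I1 {q : ℝ} (hq₁ : 0 < q) (hq₂ : q < 1) {z : ℝ} (hz₁ : -1 ≤ z) (hz₂ : z ≤ 0) :
    Lb q z = 1 + q*z + q*z * Ub q (q*z) := by
  obtain ⟨d1, d2, d3⟩ := denoms hq₁ hq₂ hz₁ hz₂
  unfold Lb Ub
  rw [show q*(q*z) = q^2*z by ring]
  field_simp
  ring

lemma I2 {q : ℝ} (hq₁ : 0 < q) (hq₂ : q < 1) {z : ℝ} (hz₁ : -1 ≤ z) (hz₂ : z ≤ 0) :
    1 + q*z + q*z * Lb q (q*z) ≤ Ub q z := by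
  obtain ⟨d1, d2, d3⟩ := denoms hq₁ hq₂ hz₁ hz₂
  have key : Ub q z - (1 + q*z + q*z * Lb q (q*z))
      = 2*q^2*z^2*(1-q)*(1-q^4*z^2) / ((1-q*z)*((1-q^2*z)*(1-q^3*z))) := by
    unfold Lb Ub
    rw [show q*(q*z) = q^2*z by ring, show q^2*(q*z) = q^3*z by ring]
    field_simp
    ring
  have hz2 : z^2 ≤ 1 := by nlinarith
  have hq4 : q^4 ≤ 1 := pow_le_one₀ hq₁.le hq₂.le
  have h4 : q^4*z^2 ≤ 1 := by nlinarith [pow_pos hq₁ 4]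
  have hnum : 0 ≤ 2*q^2*z^2*(1-q)*(1-q^4*z^2) := by
    apply mul_nonneg (mul_nonneg (by positivity) (by linarith)) (by linarith)
  have hden : 0 < (1-q*z)*((1-q^2*z)*(1-q^3*z)) := by positivity
  nlinarith [div_nonneg hnum hden.le]

lemma Lb_pos {q : ℝ} (hq₁ : 0 < q) (hq₂ : q < 1) {z : ℝ} (hz₁ : -1 ≤ z) (hz₂ : z ≤ 0) :
    0 < Lb q z := by
  obtain ⟨d1, d2, d3⟩ := denoms hq₁ hq₂ hz₁ hz₂
  have key : Lb q z = ((1+q*z)*(1-q^2*z) - 2*q^2*z^2*(1-q)) / ((1-q*z)*(1-q^2*z)) := by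
    unfold Lb; field_simp
  have cert : (1+q*z)*(1-q^2*z) - 2*q^2*z^2*(1-q)
      = (1-q)^2*(1+q) + q*(1+z)*((1-q) + (2-q)*(q-q*z)) := by ring
  have hnum : 0 < (1+q*z)*(1-q^2*z) - 2*q^2*z^2*(1-q) := by
    rw [cert]
    have h1 : 0 < (1-q)^2*(1+q) := by
      have hq' : (0:ℝ) < 1-q := by linarith
      positivity
    have h2 : 0 ≤ q*(1+z)*((1-q) + (2-q)*(q-q*z)) := by
      apply mul_nonneg (mul_nonneg hq₁.le (by linarith))
      nlinarith
    linarith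
  rw [key]
  exact div_pos hnum (mul_pos d1 d2)

lemma Ub_bounds {q : ℝ} (hq₁ : 0 < q) (hq₂ : q < 1) {z : ℝ} (hz₁ : -1 ≤ z) (hz₂ : z ≤ 0) :
    0 ≤ Ub q z ∧ Ub q z ≤ 1 := by
  obtain ⟨d1, d2, d3⟩ := denoms hq₁ hq₂ hz₁ hz₂
  unfold Ub
  constructor
  · apply div_nonneg _ d1.le; nlinarith
  · rw [div_le_one d1]; nlinarith

lemma sandwich {q : ℝ} (hq₁ : 0 < q) (hq₂ : q < 1) (m : ℕ) :
    ∀ z, -1 ≤ z → z ≤ 0 →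
      Lb q z - (3 * (∑' j : ℕ, ((j:ℝ)+1) * q ^ j) + 4) * q^m ≤ 2 * theta q z - 1 ∧
      2 * theta q z - 1 ≤ Ub q z + (3 * (∑' j : ℕ, ((j:ℝ)+1) * q ^ j) + 4) * q^m := by
  set S := ∑' j : ℕ, ((j:ℝ)+1) * q ^ j with hS
  set C := 3 * S + 4 with hC
  have hS1 : 1 ≤ S := by
    have := Summable.le_tsum (sum_geom_aux hq₁ hq₂) 0 (fun j _ => by positivity)
    simpa using this
  induction m with
  | zero =>
    intro z hz₁ hz₂
    have habs : |theta q z| ≤ S := abs_theta_le hq₁ hq₂ (abs_le.mpr ⟨hz₁, by linarith⟩)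
    obtain ⟨hU0, hU1⟩ := Ub_bounds hq₁ hq₂ hz₁ hz₂
    have hLU : Lb q z ≤ Ub q z := by
      unfold Lb Ub
      obtain ⟨d1, d2, d3⟩ := denoms hq₁ hq₂ hz₁ hz₂
      have : 0 ≤ 2*q^2*z^2*(1-q)/((1-q*z)*(1-q^2*z)) :=
        div_nonneg (by nlinarith [mul_nonneg (mul_nonneg (sq_nonneg q) (sq_nonneg z)) (by linarith : (0:ℝ) ≤ 1-q)]) (mul_pos d1 d2).le
      linarith
    rw [abs_le] at habs
    obtain ⟨ha1, ha2⟩ := habs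
    simp only [pow_zero, mul_one]
    constructor <;> nlinarith
  | succ m ih =>
    intro z hz₁ hz₂
    have hw₁ : -1 ≤ q*z := by nlinarith
    have hw₂ : q*z ≤ 0 := by nlinarith
    obtain ⟨ihl, ihr⟩ := ih (q*z) hw₁ hw₂
    have hFE : 2 * theta q z - 1 = 1 + q*z + q*z * (2 * theta q (q*z) - 1) := by
      have := theta_FE hq₁ hq₂ z
      nlinarith [this]
    have hCq : 0 ≤ C * q^m := by positivity
    constructor
    · rw [hFE, I1 hq₁ hq₂ hz₁ hz₂]
      have key : q*z * (2 * theta q (q*z) - 1) - q*z * Ub q (q*z) ≥ -(C * q^(m+1)) := by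
        set d := 2 * theta q (q*z) - 1 - Ub q (q*z) with hd
        have hdle : d ≤ C * q^m := by linarith
        have : q*z * (2 * theta q (q*z) - 1) - q*z * Ub q (q*z) = q*z*d := by ring
        rw [this]
        have hCq1 : 0 ≤ C*q^(m+1) := mul_nonneg (by linarith) (pow_nonneg hq₁.le _)
        rcases le_or_gt d 0 with hd0 | hd0
        · nlinarith [mul_nonneg (neg_nonneg.mpr hw₂) (neg_nonneg.mpr hd0)]
        · have h1 : q*z*d ≥ -q*d := by
            nlinarith [mul_nonneg (mul_nonneg hq₁.le (by linarith : (0:ℝ) ≤ z+1)) hd0.le]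
          have h2 : -q*d ≥ -q*(C*q^m) := by nlinarith
          calc q*z*d ≥ -q*(C*q^m) := by linarith
            _ = -(C*q^(m+1)) := by ring
      linarith
    · rw [hFE]
      have key : q*z * (2 * theta q (q*z) - 1) ≤ q*z * Lb q (q*z) + C * q^(m+1) := by
        set e := 2 * theta q (q*z) - 1 - Lb q (q*z) with he
        have hege : -(C * q^m) ≤ e := by linarith
        have hsplit : q*z * (2 * theta q (q*z) - 1) = q*z * Lb q (q*z) + q*z*e := by ring
        rw [hsplit]
        have hCq1 : 0 ≤ C*q^(m+1) := mul_nonneg (by linarith) (pow_nonneg hq₁.le _)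
        rcases le_or_gt 0 e with he0 | he0
        · nlinarith [mul_nonneg (neg_nonneg.mpr hw₂) he0]
        · have h1 : q*z*e ≤ -q*e := by
            nlinarith [mul_nonneg (mul_nonneg hq₁.le (by linarith : (0:ℝ) ≤ z+1)) (neg_nonneg.mpr he0.le)]
          have h2 : -q*e ≤ q*(C*q^m) := by nlinarith
          have : q*(C*q^m) = C*q^(m+1) := by ring
          linarith
      have := I2 hq₁ hq₂ hz₁ hz₂
      linarith

lemma theta_gt_half {q : ℝ} (hq₁ : 0 < q) (hq₂ : q < 1) {z : ℝ} (hz₁ : -1 ≤ z) (hz₂ : z ≤ 0) :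
    1/2 < theta q z := by
  have hK : Lb q z ≤ 2 * theta q z - 1 := by
    set C := 3 * (∑' j : ℕ, ((j:ℝ)+1) * q ^ j) + 4 with hC
    have hlim : Filter.Tendsto (fun m : ℕ => Lb q z - C * q^m) Filter.atTop (nhds (Lb q z - C * 0)) := by
      exact (tendsto_const_nhds.sub (((tendsto_pow_atTop_nhds_zero_of_lt_one hq₁.le hq₂)).const_mul C))
    rw [mul_zero, sub_zero] at hlim
    apply le_of_tendsto' hlim
    intro m
    exact (sandwich hq₁ hq₂ m z hz₁ hz₂).1
  have := Lb_pos hq₁ hq₂ hz₁ hz₂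
  linarith

lemma Hf_two_step {q : ℝ} (hq₁ : 0 < q) (hq₂ : q < 1) (y : ℝ) :
    Hf q y = (2 * theta q y - 1) + q^3 * y^2 * Hf q (q^2 * y) := by
  have e1 := Hf_FE hq₁ hq₂ y
  have e2 := Hf_FE hq₁ hq₂ (q*y)
  rw [show q*(q*y) = q^2*y by ring] at e2
  have e3 := theta_FE hq₁ hq₂ y
  linear_combination e1 + (q*y) * e2 - e3

lemma Hf_ge {q : ℝ} (hq₁ : 0 < q) (hq₂ : q < 1) (m : ℕ) :
    ∀ y, -1 ≤ y → y ≤ 0 →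
      (2 * theta q y - 1) - (3 * (∑' j : ℕ, ((j:ℝ)+1) * q ^ j) + 1) * q^(3*m) ≤ Hf q y := by
  set S := ∑' j : ℕ, ((j:ℝ)+1) * q ^ j with hS
  set C := 3 * S + 1 with hC
  have hS1 : 1 ≤ S := by
    have := Summable.le_tsum (sum_geom_aux hq₁ hq₂) 0 (fun j _ => by positivity)
    simpa using this
  induction m with
  | zero =>
    intro y hy₁ hy₂
    have h1 : |theta q y| ≤ S := abs_theta_le hq₁ hq₂ (abs_le.mpr ⟨hy₁, by linarith⟩)
    have h2 : |Hf q y| ≤ S := abs_Hf_le hq₁ hq₂ (abs_le.mpr ⟨hy₁, by linarith⟩)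
    rw [abs_le] at h1 h2
    obtain ⟨h1a, h1b⟩ := h1
    obtain ⟨h2a, h2b⟩ := h2
    simp only [mul_zero, pow_zero, mul_one]
    linarith
  | succ m ih =>
    intro y hy₁ hy₂
    have hw₁ : -1 ≤ q^2*y := by nlinarith [pow_le_one₀ hq₁.le hq₂.le (n := 2), pow_pos hq₁ 2]
    have hw₂ : q^2*y ≤ 0 := by nlinarith [pow_pos hq₁ 2]
    have ihw := ih (q^2*y) hw₁ hw₂
    have hK : 0 < 2 * theta q (q^2*y) - 1 := by
      have := theta_gt_half hq₁ hq₂ hw₁ hw₂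
      linarith
    rw [Hf_two_step hq₁ hq₂ y]
    have hfac : 0 ≤ q^3 * y^2 := by positivity
    have hy2 : y^2 ≤ 1 := by nlinarith
    have hfacle : q^3 * y^2 ≤ q^3 := by nlinarith [pow_pos hq₁ 3]
    have key : q^3 * y^2 * Hf q (q^2*y) ≥ -(C * q^(3*(m+1))) := by
      have h1 : Hf q (q^2*y) ≥ -(C * q^(3*m)) := by linarith
      have hCq : 0 ≤ C * q^(3*m) := mul_nonneg (by linarith) (pow_nonneg hq₁.le _)
      have h2 : q^3 * y^2 * Hf q (q^2*y) ≥ q^3 * y^2 * (-(C * q^(3*m))) :=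
        mul_le_mul_of_nonneg_left h1 hfac
      have h3 : q^3 * y^2 * (-(C * q^(3*m))) ≥ q^3 * (-(C * q^(3*m))) := by nlinarith
      have h4 : q^3 * (-(C * q^(3*m))) = -(C * q^(3*(m+1))) := by ring
      linarith
    linarith

lemma Hf_pos {q : ℝ} (hq₁ : 0 < q) (hq₂ : q < 1) {y : ℝ} (hy : -1 ≤ y) : 0 < Hf q y := by
  rcases le_or_gt y 0 with hy₂ | hy₂
  · have hK : 0 < 2 * theta q y - 1 := by
      have := theta_gt_half hq₁ hq₂ hy hy₂
      linarith
    have hlim : Filter.Tendsto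
        (fun m : ℕ => (2 * theta q y - 1) - (3 * (∑' j : ℕ, ((j:ℝ)+1) * q ^ j) + 1) * q^(3*m))
        Filter.atTop (nhds ((2 * theta q y - 1) - (3 * (∑' j : ℕ, ((j:ℝ)+1) * q ^ j) + 1) * 0)) := by
      apply tendsto_const_nhds.sub
      apply Filter.Tendsto.const_mul
      have h3 : Filter.Tendsto (fun m : ℕ => 3*m) Filter.atTop Filter.atTop :=
        Filter.tendsto_atTop_atTop_of_monotone (fun a b hab => by omega)
          (fun b => ⟨b, by omega⟩)
      exact (tendsto_pow_atTop_nhds_zero_of_lt_one hq₁.le hq₂).comp h3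
    rw [mul_zero, sub_zero] at hlim
    have hle : 2 * theta q y - 1 ≤ Hf q y := by
      apply le_of_tendsto' hlim
      intro m
      exact Hf_ge hq₁ hq₂ m y hy hy₂
    linarith
  · unfold Hf
    apply Summable.tsum_pos (sum_H hq₁ hq₂ y) _ 0
    · norm_num
    · intro j
      positivity

lemma theta_hasDerivAt {q : ℝ} (hq₁ : 0 < q) (hq₂ : q < 1) (x : ℝ) :
    HasDerivAt (theta q) (q * Hf q (q * x)) x := by
  set R : ℝ := |x| + 1 with hR
  have hR1 : 1 ≤ R := by rw [hR]; linarith [abs_nonneg x]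
  have hRx : |x| < R := by simp [hR]
  set u : ℕ → ℝ := fun j => ((j:ℝ)+1) * q ^ (j * (j+1) / 2) * R ^ j with hu
  have hu_sum : Summable u := sum_master hq₁ hq₂ R (by positivity)
  have hbound : ∀ j : ℕ, ∀ y ∈ Set.Ioo (-R) R,
      ‖(j:ℝ) * q ^ (j * (j+1) / 2) * y ^ (j-1)‖ ≤ u j := by
    intro j y hy
    have hyR : |y| ≤ R := by
      rw [abs_le]
      exact ⟨(hy.1).le, (hy.2).le⟩
    simp only [Real.norm_eq_abs, abs_mul, abs_pow, abs_of_nonneg hq₁.le, Nat.abs_cast]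
    have h1 : |y| ^ (j-1) ≤ R ^ (j-1) := pow_le_pow_left₀ (abs_nonneg y) hyR _
    have h2 : R ^ (j-1) ≤ R ^ j := pow_le_pow_right₀ hR1 (Nat.sub_le j 1)
    have h3 : (j:ℝ) ≤ (j:ℝ)+1 := by linarith
    have hQ : 0 ≤ q ^ (j * (j+1) / 2) := pow_nonneg hq₁.le _
    calc (j:ℝ) * q ^ (j * (j+1) / 2) * |y| ^ (j-1)
        ≤ (j:ℝ) * q ^ (j * (j+1) / 2) * R ^ j := by
          apply mul_le_mul_of_nonneg_left (h1.trans h2) (by positivity)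
      _ ≤ ((j:ℝ)+1) * q ^ (j * (j+1) / 2) * R ^ j := by
          apply mul_le_mul_of_nonneg_right _ (by positivity)
          apply mul_le_mul_of_nonneg_right h3 hQ
  have hderiv : ∀ j : ℕ, ∀ y ∈ Set.Ioo (-R) R,
      HasDerivAt (fun z : ℝ => q ^ (j * (j+1) / 2) * z ^ j)
        ((j:ℝ) * q ^ (j * (j+1) / 2) * y ^ (j-1)) y := by
    intro j y _
    have := (hasDerivAt_pow j y).const_mul (q ^ (j * (j+1) / 2))
    exact this.congr_deriv (by ring)
  have hx0 : x ∈ Set.Ioo (-R) R := by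
    constructor <;> cases abs_cases x <;> simp [hR] <;> linarith [abs_nonneg x]
  have hmain := hasDerivAt_tsum_of_isPreconnected hu_sum isOpen_Ioo
    (convex_Ioo (-R) R).isPreconnected hderiv hbound hx0
    (sum_theta hq₁ hq₂ x) hx0
  have hrw : (∑' j : ℕ, (j:ℝ) * q ^ (j * (j+1) / 2) * x ^ (j-1)) = q * Hf q (q * x) := by
    have hsum' : Summable (fun j : ℕ => (j:ℝ) * q ^ (j * (j+1) / 2) * x ^ (j-1)) := by
      apply Summable.of_norm_bounded hu_sum
      intro j
      exact hbound j x hx0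
    rw [Summable.tsum_eq_zero_add hsum']
    simp only [Nat.cast_zero, zero_mul, Nat.cast_add, Nat.cast_one, Nat.add_sub_cancel]
    have h1 : ∀ j : ℕ, ((j:ℝ)+1) * q ^ ((j+1) * (j+1+1) / 2) * x ^ j
        = q * (((j:ℝ)+1) * q ^ (j * (j+1) / 2) * (q*x) ^ j) := by
      intro j
      rw [tri_succ j, pow_add, mul_pow]
      ring
    calc 0 + ∑' j : ℕ, ((j:ℝ)+1) * q ^ ((j+1) * (j+1+1) / 2) * x ^ j
        = ∑' j : ℕ, q * (((j:ℝ)+1) * q ^ (j * (j+1) / 2) * (q*x) ^ j) := by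
          rw [zero_add]; congr 1; funext j; exact h1 j
      _ = q * Hf q (q * x) := by rw [tsum_mul_left]; rfl
  rw [← hrw]
  have : theta q = fun z : ℝ => ∑' j : ℕ, q ^ (j * (j+1) / 2) * z ^ j := rfl
  rw [this]
  exact hmain

theorem stmt_10 (q : ℝ) (hq₁ : 0 < q) (hq₂ : q < 1) (x : ℝ) (hx : -1 / q < x) :
    0 < deriv (theta q) x := by
  have hd := theta_hasDerivAt hq₁ hq₂ x
  rw [hd.deriv]
  have hqx : -1 ≤ q * x := by
    have h1 : (-1/q) * q < x * q := by
      apply mul_lt_mul_of_pos_right hx hq₁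
    have h2 : (-1/q) * q = -1 := by field_simp
    nlinarith
  exact mul_pos hq₁ (Hf_pos hq₁ hq₂ hqx)
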